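/- Let f : A → B be a surjective homomorphism of finitely generated abelian groups such that for every prime p and every positive integer r, the induced map Tor₁(A, ℤ/pʳ) → Tor₁(B, ℤ/pʳ) is surjective. Then f admits a section, i.e., there exists a homomorphism s : B → A with f ∘ s = id_B. -/

import Mathlib

open CategoryTheory CategoryTheory.Limits CategoryTheory.MonoidalCategory
open scoped DirectSum

noncomputable section

namespace Stmt2Helper

abbrev Zℤ : ModuleCat.{0} ℤ := ModuleCat.of ℤ ℤ

def mulN (n : ℕ) : Zℤ ⟶ Zℤ := ModuleCat.ofHom ((n : ℤ) • LinearMap.id)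

def cplx (n : ℕ) : ChainComplex (ModuleCat.{0} ℤ) ℕ where
  X i := match i with
    | 0 => Zℤ
    | 1 => Zℤ
    | _+2 => ModuleCat.of ℤ PUnit
  d i j := match i, j with
    | 1, 0 => mulN n
    | 0, _ => 0
    | 1, _+1 => 0
    | _+2, _ => 0
  shape i j h := by
    match i, j with
    | 0, _ => rfl
    | 1, 0 => exact absurd rfl h
    | 1, _+1 => rfl
    | _+2, _ => rfl
  d_comp_d' i j k hij hjk := by
    simp only [ComplexShape.down_Rel] at hij hjk
    subst hij hjk
    match k with
    | 0 => exact zero_comp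
    | _+1 => exact zero_comp

instance (n i : ℕ) : Projective ((cplx n).X i) := by
  match i with
  | 0 => exact ModuleCat.projective_of_free (Module.Basis.singleton (Fin 1) ℤ)
  | 1 => exact ModuleCat.projective_of_free (Module.Basis.singleton (Fin 1) ℤ)
  | k+2 =>
    haveI : Subsingleton (((cplx n).X (k+2) : Type)) := inferInstanceAs (Subsingleton PUnit)
    exact (ModuleCat.isZero_of_subsingleton _).projective

def castHom (n : ℕ) : Zℤ ⟶ ModuleCat.of ℤ (ZMod n) :=
  ModuleCat.ofHom (Int.castAddHom (ZMod n)).toIntLinearMap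

def resπ (n : ℕ) : cplx n ⟶ (ChainComplex.single₀ (ModuleCat.{0} ℤ)).obj
    (ModuleCat.of ℤ (ZMod n)) :=
  (ChainComplex.toSingle₀Equiv _ _).symm ⟨castHom n, by
    apply ModuleCat.hom_ext
    apply LinearMap.ext_ring
    show ((((n : ℤ) * 1 : ℤ)) : ZMod n) = 0
    simp⟩

@[simp] lemma resπ_f_zero (n : ℕ) : (resπ n).f 0 = castHom n :=
  ChainComplex.toSingle₀Equiv_symm_apply_f_zero _ _

lemma cplx_exactAt_succ (n : ℕ) [NeZero n] (k : ℕ) : (cplx n).ExactAt (k + 1) := by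
  rw [HomologicalComplex.exactAt_iff' _ (k + 2) (k + 1) k (by simp) (by simp)]
  rw [ShortComplex.moduleCat_exact_iff]
  match k with
  | 0 =>
    intro (x : ℤ) hx
    refine ⟨0, ?_⟩
    have hx' : (n : ℤ) * x = 0 := hx
    have : x = 0 := by
      rcases mul_eq_zero.1 hx' with h | h
      · exact absurd (by exact_mod_cast h) (NeZero.ne n)
      · exact h
    rw [map_zero, this]; rfl
  | k+1 =>
    intro x _
    exact ⟨0, @Subsingleton.elim _ (inferInstanceAs (Subsingleton PUnit)) _ _⟩


def res (n : ℕ) [NeZero n] : ProjectiveResolution (ModuleCat.of ℤ (ZMod n)) where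
  complex := cplx n
  π := resπ n
  quasiIso := ⟨fun k => by
    cases k with
    | zero =>
      rw [ChainComplex.quasiIsoAt₀_iff, ShortComplex.quasiIso_iff_of_zeros']
      · constructor
        · rw [ShortComplex.moduleCat_exact_iff]
          intro (x : ℤ) hx
          have hx' : ((x : ℤ) : ZMod n) = 0 := hx
          obtain ⟨y, hy⟩ := (ZMod.intCast_zmod_eq_zero_iff_dvd x n).1 hx'
          exact ⟨y, hy.symm⟩
        · rw [ModuleCat.epi_iff_surjective]
          intro z
          obtain ⟨x, hx⟩ := ZMod.intCast_surjective (n := n) z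
          exact ⟨x, hx⟩
      all_goals rfl
    | succ k =>
      rw [quasiIsoAt_iff_exactAt']
      · exact cplx_exactAt_succ n k
      · apply ChainComplex.exactAt_succ_single_obj⟩


section Key

variable {A B : Type} [AddCommGroup A] [AddCommGroup B]

lemma rid_natural (f : A →+ B) (x : TensorProduct ℤ A ℤ) :
    TensorProduct.rid ℤ B (LinearMap.rTensor ℤ f.toIntLinearMap x) =
      f (TensorProduct.rid ℤ A x) := by
  induction x using TensorProduct.induction_on with
  | zero => simp
  | tmul a r => simp [TensorProduct.rid_tmul]
  | add x y hx hy => simp [map_add, hx, hy]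

theorem torsion_lift (f : A →+ B) (n : ℕ) [NeZero n]
    (h : Function.Surjective
      ⇑(((Tor (ModuleCat.{0} ℤ) 1).map
          (show ModuleCat.of ℤ A ⟶ ModuleCat.of ℤ B from ModuleCat.ofHom f.toIntLinearMap)).app
        (ModuleCat.of ℤ (ZMod n)))) :
    ∀ b : B, n • b = 0 → ∃ a : A, n • a = 0 ∧ f a = b := by
  intro b hb
  set C := ModuleCat.{0} ℤ
  set f' : ModuleCat.of ℤ A ⟶ ModuleCat.of ℤ B := ModuleCat.ofHom f.toIntLinearMap with hf'
  set F := (tensoringLeft C).obj (ModuleCat.of ℤ A) with hF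
  set G := (tensoringLeft C).obj (ModuleCat.of ℤ B) with hG
  set α : F ⟶ G := (tensoringLeft C).map f' with hα
  set P := res n with hP
  set FP := (F.mapHomologicalComplex (ComplexShape.down ℕ)).obj P.complex with hFP
  set GP := (G.mapHomologicalComplex (ComplexShape.down ℕ)).obj P.complex with hGP
  set φ : FP ⟶ GP := (NatTrans.mapHomologicalComplex α (ComplexShape.down ℕ)).app P.complex
    with hφ
  -- rewrite the Tor map via the chosen resolution
  have heq : ((Tor C 1).map f').app (ModuleCat.of ℤ (ZMod n)) =
      (P.isoLeftDerivedObj F 1).hom ≫ HomologicalComplex.homologyMap φ 1 ≫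
        (P.isoLeftDerivedObj G 1).inv :=
    ProjectiveResolution.leftDerived_app_eq α P 1
  rw [heq] at h
  -- surjectivity of the homology map
  have hH : Function.Surjective ⇑(HomologicalComplex.homologyMap φ 1) := by
    intro t
    obtain ⟨v, hv⟩ := h ((P.isoLeftDerivedObj G 1).inv t)
    refine ⟨(P.isoLeftDerivedObj F 1).hom v, ?_⟩
    have hv' : (P.isoLeftDerivedObj G 1).inv
        ((HomologicalComplex.homologyMap φ 1) ((P.isoLeftDerivedObj F 1).hom v)) =
        (P.isoLeftDerivedObj G 1).inv t := hv
    exact (ModuleCat.mono_iff_injective ((P.isoLeftDerivedObj G 1).inv)).1 inferInstance hv'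
  -- differentials of the mapped complexes are multiplication by n
  have hdF : FP.d 1 0 = (n : ℤ) • 𝟙 (FP.X 1) := by
    have e : FP.d 1 0 = F.map ((n : ℤ) • 𝟙 Zℤ) := rfl
    rw [e, Functor.map_zsmul]
    exact congrArg (fun g => (n : ℤ) • g) (F.map_id Zℤ)
  have hdG : GP.d 1 0 = (n : ℤ) • 𝟙 (GP.X 1) := by
    have e : GP.d 1 0 = G.map ((n : ℤ) • 𝟙 Zℤ) := rfl
    rw [e, Functor.map_zsmul]
    exact congrArg (fun g => (n : ℤ) • g) (G.map_id Zℤ)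
  have hd21F : FP.d 2 1 = 0 := by
    show F.map ((cplx n).d 2 1) = 0
    rw [show (cplx n).d 2 1 = 0 from rfl, Functor.map_zero]
  have hd21G : GP.d 2 1 = 0 := by
    show G.map ((cplx n).d 2 1) = 0
    rw [show (cplx n).d 2 1 = 0 from rfl, Functor.map_zero]
  haveI hπA : IsIso (FP.homologyπ 1) := FP.isIso_homologyπ 2 1 (by simp) hd21F
  haveI hπB : IsIso (GP.homologyπ 1) := GP.isIso_homologyπ 2 1 (by simp) hd21G
  -- surjectivity of the map on cycles
  have hC : Function.Surjective ⇑(HomologicalComplex.cyclesMap φ 1) := by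
    intro cB
    obtain ⟨hA, hhA⟩ := hH ((GP.homologyπ 1) cB)
    obtain ⟨cA, hcA⟩ :=
      ((ModuleCat.epi_iff_surjective (FP.homologyπ 1)).1 inferInstance) hA
    refine ⟨cA, (ModuleCat.mono_iff_injective (GP.homologyπ 1)).1 inferInstance ?_⟩
    have hnat := ConcreteCategory.congr_hom
      (HomologicalComplex.homologyπ_naturality (φ := φ) (i := 1)) cA
    calc (GP.homologyπ 1) ((HomologicalComplex.cyclesMap φ 1) cA)
        = (HomologicalComplex.homologyMap φ 1) ((FP.homologyπ 1) cA) := hnat.symm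
      _ = (GP.homologyπ 1) cB := by rw [hcA, hhA]
  -- the cycle in `GP` corresponding to `b`
  set yB : GP.X 1 := (b ⊗ₜ (1 : ℤ) : TensorProduct ℤ B ℤ) with hyB
  have hyB0 : GP.d 1 0 yB = 0 := by
    rw [hdG]
    show (n : ℤ) • (b ⊗ₜ (1 : ℤ) : TensorProduct ℤ B ℤ) = 0
    rw [TensorProduct.smul_tmul', natCast_zsmul, hb, TensorProduct.zero_tmul]
  set k : ModuleCat.of ℤ ℤ ⟶ GP.X 1 := ModuleCat.ofHom (LinearMap.toSpanSingleton ℤ _ yB) with hk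
  have hkd : k ≫ GP.d 1 0 = 0 := by
    apply ModuleCat.hom_ext
    apply LinearMap.ext_ring
    show GP.d 1 0 (k ((1 : ℤ) : ↑(ModuleCat.of ℤ ℤ))) = 0
    rw [show k ((1 : ℤ) : ↑(ModuleCat.of ℤ ℤ)) = yB from one_smul ℤ yB, hyB0]
  set yc : ModuleCat.of ℤ ℤ ⟶ GP.cycles 1 := GP.liftCycles k 0 (by simp) hkd with hyc
  set cB : GP.cycles 1 := yc ((1 : ℤ) : ↑(ModuleCat.of ℤ ℤ)) with hcB
  have hicB : GP.iCycles 1 cB = yB :=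
    (ConcreteCategory.congr_hom (GP.liftCycles_i k 0 (by simp) hkd)
      ((1 : ℤ) : ↑(ModuleCat.of ℤ ℤ))).trans (one_smul ℤ yB)
  obtain ⟨cA, hcA⟩ := hC cB
  set xA : FP.X 1 := FP.iCycles 1 cA with hxA
  have hx0 : (n : ℤ) • xA = 0 := by
    have := ConcreteCategory.congr_hom (FP.iCycles_d (i := 1) (j := 0)) cA
    rw [hdF] at this
    exact this
  have himg : φ.f 1 xA = yB := by
    have h1 : GP.iCycles 1 ((HomologicalComplex.cyclesMap φ 1) cA) = φ.f 1 xA :=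
      ConcreteCategory.congr_hom (HomologicalComplex.cyclesMap_i φ 1) cA
    rw [hcA, hicB] at h1
    exact h1.symm
  refine ⟨TensorProduct.rid ℤ A xA, ?_, ?_⟩
  · have h0 : (TensorProduct.rid ℤ A) ((n : ℤ) • xA) = (0 : A) := by rw [hx0]; exact map_zero (TensorProduct.rid ℤ A)
    calc n • (TensorProduct.rid ℤ A) xA
        = (n : ℤ) • (TensorProduct.rid ℤ A) xA := (natCast_zsmul _ _).symm
      _ = (TensorProduct.rid ℤ A) ((n : ℤ) • xA) := (map_smul _ _ _).symm
      _ = 0 := h0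
  · calc f ((TensorProduct.rid ℤ A) xA)
        = TensorProduct.rid ℤ B (LinearMap.rTensor ℤ f.toIntLinearMap xA) :=
          (rid_natural f xA).symm
      _ = TensorProduct.rid ℤ B (φ.f 1 xA) := rfl
      _ = TensorProduct.rid ℤ B yB := by rw [himg]
      _ = b := by rw [hyB]; exact (TensorProduct.rid_tmul b (1:ℤ)).trans (one_smul ℤ b)

end Key

theorem section_exists {A B : Type} [AddCommGroup A] [AddCommGroup B] [AddGroup.FG B]
    (f : A →+ B) (hf : Function.Surjective f)
    (hl : ∀ (p r : ℕ), p.Prime → 1 ≤ r →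
      ∀ b : B, p ^ r • b = 0 → ∃ a : A, p ^ r • a = 0 ∧ f a = b) :
    ∃ s : B →+ A, f.comp s = AddMonoidHom.id B := by
  obtain ⟨m, ι, fι, p, hp, e, ⟨eq⟩⟩ := AddCommGroup.equiv_free_prod_directSum_zmod B
  haveI : DecidableEq ι := Classical.decEq ι
  -- lifts of the free generators
  choose g hg using fun j : Fin m => hf (eq.symm (Finsupp.single j 1, 0))
  -- lifts of the torsion generators
  have key : ∀ i : ι, ∃ a : A, (p i ^ e i) • a = 0 ∧
      f a = eq.symm (0, DirectSum.of (fun i => ZMod (p i ^ e i)) i 1) := by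
    intro i
    rcases Nat.eq_zero_or_pos (e i) with h0 | hpos
    · refine ⟨0, by simp, ?_⟩
      have h1 : (1 : ZMod (p i ^ e i)) = 0 := by
        rw [h0, pow_zero]
        exact Subsingleton.elim _ _
      rw [h1, map_zero, map_zero]
      have : ((0, 0) : (Fin m →₀ ℤ) × ⨁ (i : ι), ZMod (p i ^ e i)) = 0 := rfl
      rw [this, map_zero]
    · refine hl (p i) (e i) (hp i) hpos _ ?_
      rw [← map_nsmul]
      have h2 : (p i ^ e i) • ((0, DirectSum.of (fun i => ZMod (p i ^ e i)) i 1) :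
          (Fin m →₀ ℤ) × ⨁ (i : ι), ZMod (p i ^ e i)) = 0 := by
        have h3 : (p i ^ e i) • (DirectSum.of (fun i => ZMod (p i ^ e i)) i 1) = 0 := by
          rw [← map_nsmul]
          have : (p i ^ e i) • (1 : ZMod (p i ^ e i)) = 0 := by
            rw [nsmul_eq_mul, mul_one, ZMod.natCast_self]
          rw [this, map_zero]
        rw [Prod.smul_mk, smul_zero, h3]
        rfl
      rw [h2, map_zero]
  choose a ha1 ha2 using key
  -- construct the section
  set t₁ : (Fin m →₀ ℤ) →+ A := Finsupp.liftAddHom (fun j => zmultiplesHom A (g j)) with ht₁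
  set t₂ : (⨁ (i : ι), ZMod (p i ^ e i)) →+ A :=
    DirectSum.toAddMonoid (fun i => ZMod.lift (p i ^ e i)
      ⟨zmultiplesHom A (a i), by
        show ((p i ^ e i : ℕ) : ℤ) • a i = 0
        rw [natCast_zsmul]
        exact ha1 i⟩) with ht₂
  have claim1 : ∀ u, f (t₁ u) = eq.symm (u, 0) := by
    intro u
    induction u using Finsupp.induction_linear with
    | zero =>
      rw [map_zero, map_zero]
      have : ((0, 0) : (Fin m →₀ ℤ) × ⨁ (i : ι), ZMod (p i ^ e i)) = 0 := rfl
      rw [this, map_zero]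
    | add u v hu hv =>
      rw [map_add, map_add, hu, hv, ← map_add]
      congr 1
      rw [Prod.mk_add_mk, add_zero]
    | single j z =>
      rw [ht₁, Finsupp.liftAddHom_apply_single]
      show f (z • g j) = _
      rw [map_zsmul, hg j, ← map_zsmul]
      congr 1
      rw [Prod.smul_mk, smul_zero, Finsupp.smul_single, smul_eq_mul, mul_one]
  have claim2 : ∀ v, f (t₂ v) = eq.symm (0, v) := by
    intro v
    induction v using DirectSum.induction_on with
    | zero =>
      rw [map_zero, map_zero]
      have : ((0, 0) : (Fin m →₀ ℤ) × ⨁ (i : ι), ZMod (p i ^ e i)) = 0 := rfl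
      rw [this, map_zero]
    | of i y =>
      obtain ⟨z, rfl⟩ := ZMod.intCast_surjective y
      rw [ht₂, DirectSum.toAddMonoid_of, ZMod.lift_coe]
      show f (z • a i) = _
      rw [map_zsmul, ha2 i, ← map_zsmul]
      have hz : z • ((0, DirectSum.of (fun i => ZMod (p i ^ e i)) i 1) :
          (Fin m →₀ ℤ) × ⨁ (i : ι), ZMod (p i ^ e i)) =
          (0, DirectSum.of (fun i => ZMod (p i ^ e i)) i ((z : ℤ) : ZMod (p i ^ e i))) := by
        rw [Prod.smul_mk, smul_zero, ← map_zsmul, zsmul_one]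
      rw [hz]
    | add u v hu hv =>
      rw [map_add, map_add, hu, hv, ← map_add]
      have hz : (((0 : Fin m →₀ ℤ), u) + ((0 : Fin m →₀ ℤ), v)) = ((0 : Fin m →₀ ℤ), u + v) := by
        rw [Prod.mk_add_mk, add_zero]
      rw [hz]
  refine ⟨((t₁.comp (AddMonoidHom.fst _ _)) + (t₂.comp (AddMonoidHom.snd _ _))).comp
    eq.toAddMonoidHom, ?_⟩
  ext b
  show f (t₁ (eq b).1 + t₂ (eq b).2) = b
  rw [map_add, claim1, claim2, ← map_add]
  have : (((eq b).1, 0) + (0, (eq b).2) :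
      (Fin m →₀ ℤ) × ⨁ (i : ι), ZMod (p i ^ e i)) = eq b := by
    rw [Prod.mk_add_mk, add_zero, zero_add]
  rw [this, AddEquiv.symm_apply_apply]

end Stmt2Helper



open CategoryTheory

/-- A surjection `f : A → B` of finitely generated abelian groups such that
`Tor₁(A, ℤ/pʳ) → Tor₁(B, ℤ/pʳ)` is surjective for every prime `p` and every `r ≥ 1`
admits a section. -/
theorem stmt2 {A B : Type} [AddCommGroup A] [AddCommGroup B] [AddGroup.FG A] [AddGroup.FG B]
    (f : A →+ B) (hf : Function.Surjective f)
    (htor : ∀ (p r : ℕ), p.Prime → 1 ≤ r →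
      Function.Surjective
        ⇑(((Tor (ModuleCat.{0} ℤ) 1).map
            (show ModuleCat.of ℤ A ⟶ ModuleCat.of ℤ B from ModuleCat.ofHom f.toIntLinearMap)).app
          (ModuleCat.of ℤ (ZMod (p ^ r))))) :
    ∃ s : B →+ A, f.comp s = AddMonoidHom.id B := by
  apply Stmt2Helper.section_exists f hf
  intro p r hp hr b hb
  haveI : NeZero (p ^ r) := ⟨pow_ne_zero r hp.pos.ne'⟩
  exact Stmt2Helper.torsion_lift f (p ^ r) (htor p r hp hr) b hb
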